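/- Let Ω be a finite nonempty set and let (P_s)_{s ∈ [0,T]} be a family of probability mass functions on Ω such that P_s(ω) > 0 for all s and ω and s ↦ P_s(ω) is continuous for each ω. Let λ : [0,T] → [0,∞) be an integrable sampling density with ∫₀ᵀ λ(s) ds = 1, and define the net distribution M(ω) = ∫₀ᵀ P_s(ω)·λ(s) ds. Then there exists an equivalent time t* ∈ [0,T] such that KL(P₀‖M) = KL(P₀‖P_{t*}); consequently a dataset curated over the period [0,T] with sampling density λ produces the same asymptotic loss value H(P₀) + KL(P₀‖M) as a dataset of the same size sampled entirely at time t*. -/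

import Mathlib

open MeasureTheory intervalIntegral

/-- **Paper's Proposition 3 (existence of the equivalent time).** Let `(Ps s)_{s ∈ [0,T]}` be
a family of everywhere-positive pmfs on a finite nonempty set `Ω`, pointwise continuous in
`s`, let `lam : [0,T] → [0,∞)` be an integrable sampling density with `∫₀ᵀ lam = 1`, and let
`M ω = ∫₀ᵀ Ps s ω · lam s ds` be the net distribution. Then there is an equivalent time
`t* ∈ [0,T]` with `KL(Ps 0‖M) = KL(Ps 0‖Ps t*)`; consequently the curated dataset produces
the same asymptotic loss `H(Ps 0) + KL(Ps 0‖M)` as a dataset sampled entirely at time `t*`. -/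
theorem exists_equivalent_time
    {Ω : Type*} [Fintype Ω] [Nonempty Ω] (T : ℝ) (hT : 0 ≤ T)
    (Ps : ℝ → Ω → ℝ) (lam : ℝ → ℝ)
    (hPcont : ∀ ω, ContinuousOn (fun s => Ps s ω) (Set.Icc 0 T))
    (hPpos : ∀ s ∈ Set.Icc (0 : ℝ) T, ∀ ω, 0 < Ps s ω)
    (hPsum : ∀ s ∈ Set.Icc (0 : ℝ) T, ∑ ω, Ps s ω = 1)
    (hlamnn : ∀ s ∈ Set.Icc (0 : ℝ) T, 0 ≤ lam s)
    (hlamint : IntervalIntegrable lam volume 0 T)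
    (hlamsum : ∫ s in (0:ℝ)..T, lam s = 1)
    (hint : ∀ ω, IntervalIntegrable (fun s => Ps s ω * lam s) volume 0 T)
    (M : Ω → ℝ) (hM : ∀ ω, M ω = ∫ s in (0:ℝ)..T, Ps s ω * lam s) :
    ∃ tstar ∈ Set.Icc (0 : ℝ) T,
      (∑ ω, Ps 0 ω * Real.log (Ps 0 ω / M ω) =
        ∑ ω, Ps 0 ω * Real.log (Ps 0 ω / Ps tstar ω)) ∧
      ((-∑ ω, Ps 0 ω * Real.log (Ps 0 ω)) + ∑ ω, Ps 0 ω * Real.log (Ps 0 ω / M ω) =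
        (-∑ ω, Ps 0 ω * Real.log (Ps 0 ω)) +
          ∑ ω, Ps 0 ω * Real.log (Ps 0 ω / Ps tstar ω)) := by
  have h0T : (0:ℝ) ∈ Set.Icc (0:ℝ) T := ⟨le_refl 0, hT⟩
  have huIcc : Set.uIcc (0:ℝ) T = Set.Icc 0 T := Set.uIcc_of_le hT
  have hP0pos : ∀ ω, 0 < Ps 0 ω := hPpos 0 h0T
  -- positivity of M
  have hMpos : ∀ ω, 0 < M ω := by
    intro ω
    obtain ⟨s₀, hs₀, hmin⟩ := isCompact_Icc.exists_isMinOn (Set.nonempty_Icc.mpr hT) (hPcont ω)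
    have hεpos : 0 < Ps s₀ ω := hPpos s₀ hs₀ ω
    have h1 : (∫ s in (0:ℝ)..T, Ps s₀ ω * lam s) ≤ ∫ s in (0:ℝ)..T, Ps s ω * lam s := by
      refine intervalIntegral.integral_mono_on hT (hlamint.const_mul _) (hint ω) ?_
      intro s hs
      exact mul_le_mul_of_nonneg_right (hmin hs) (hlamnn s hs)
    have h2 : (∫ s in (0:ℝ)..T, Ps s₀ ω * lam s) = Ps s₀ ω := by
      rw [intervalIntegral.integral_const_mul, hlamsum, mul_one]
    rw [hM]; linarith
  -- M sums to 1
  have hMsum : ∑ ω, M ω = 1 := by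
    have hswap : ∑ ω, ∫ s in (0:ℝ)..T, Ps s ω * lam s
        = ∫ s in (0:ℝ)..T, ∑ ω, Ps s ω * lam s :=
      (intervalIntegral.integral_finset_sum (fun ω _ => hint ω)).symm
    have hcong : (∫ s in (0:ℝ)..T, ∑ ω, Ps s ω * lam s) = ∫ s in (0:ℝ)..T, lam s := by
      refine intervalIntegral.integral_congr ?_
      intro s hs
      rw [huIcc] at hs
      show ∑ ω, Ps s ω * lam s = lam s
      rw [← Finset.sum_mul, hPsum s hs, one_mul]
    simp only [hM]
    rw [hswap, hcong, hlamsum]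
  -- the KL function along the path
  set g : ℝ → ℝ := fun t => ∑ ω, Ps 0 ω * (Real.log (Ps 0 ω) - Real.log (Ps t ω)) with hgdef
  have hlogcont : ∀ ω, ContinuousOn (fun s => Real.log (Ps s ω)) (Set.Icc 0 T) :=
    fun ω => (hPcont ω).log (fun s hs => ne_of_gt (hPpos s hs ω))
  have hgcont : ContinuousOn g (Set.Icc 0 T) := by
    refine continuousOn_finset_sum _ (fun ω _ => ?_)
    exact (continuousOn_const.sub (hlogcont ω)).const_smul (Ps 0 ω)
  have hg0 : g 0 = 0 := by
    simp [hgdef]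
  -- integrability of log (Ps) * lam
  have hlogint : ∀ ω, IntervalIntegrable (fun s => Real.log (Ps s ω) * lam s) volume 0 T := by
    intro ω
    refine hlamint.continuousOn_mul ?_
    rw [huIcc]; exact hlogcont ω
  -- Jensen (tangent line) inequality per ω
  have hJensen : ∀ ω, (∫ s in (0:ℝ)..T, Real.log (Ps s ω) * lam s) ≤ Real.log (M ω) := by
    intro ω
    have hc : 0 < M ω := hMpos ω
    have hrepr : (fun s => (Real.log (M ω) - 1) * lam s + (M ω)⁻¹ * (Ps s ω * lam s))
        = fun s => (Real.log (M ω) + (Ps s ω - M ω) / M ω) * lam s := by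
      funext s; field_simp; ring
    have hint2 : IntervalIntegrable
        (fun s => (Real.log (M ω) + (Ps s ω - M ω) / M ω) * lam s) volume 0 T := by
      rw [← hrepr]
      exact (hlamint.const_mul _).add ((hint ω).const_mul _)
    have hle : (∫ s in (0:ℝ)..T, Real.log (Ps s ω) * lam s)
        ≤ ∫ s in (0:ℝ)..T, (Real.log (M ω) + (Ps s ω - M ω) / M ω) * lam s := by
      refine intervalIntegral.integral_mono_on hT (hlogint ω) hint2 ?_
      intro s hs
      have hp : 0 < Ps s ω := hPpos s hs ω
      have hx : 0 < Ps s ω / M ω := div_pos hp hc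
      have h1 := Real.log_le_sub_one_of_pos hx
      rw [Real.log_div (ne_of_gt hp) (ne_of_gt hc)] at h1
      have hdiv : Ps s ω / M ω - 1 = (Ps s ω - M ω) / M ω := by field_simp
      rw [hdiv] at h1
      have h2 : Real.log (Ps s ω) ≤ Real.log (M ω) + (Ps s ω - M ω) / M ω := by linarith
      exact mul_le_mul_of_nonneg_right h2 (hlamnn s hs)
    have hval : (∫ s in (0:ℝ)..T, (Real.log (M ω) + (Ps s ω - M ω) / M ω) * lam s)
        = Real.log (M ω) := by
      rw [← hrepr, intervalIntegral.integral_add (hlamint.const_mul _) ((hint ω).const_mul _),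
        intervalIntegral.integral_const_mul, intervalIntegral.integral_const_mul,
        hlamsum, ← hM ω]
      field_simp
      ring
    linarith
  -- the value v = KL(P0 ‖ M)
  set v : ℝ := ∑ ω, Ps 0 ω * (Real.log (Ps 0 ω) - Real.log (M ω)) with hvdef
  -- Gibbs: 0 ≤ v
  have hvnn : 0 ≤ v := by
    have key : ∀ ω : Ω, Ps 0 ω * (Real.log (M ω) - Real.log (Ps 0 ω)) ≤ M ω - Ps 0 ω := by
      intro ω
      have hp := hP0pos ω
      have hx : 0 < M ω / Ps 0 ω := div_pos (hMpos ω) hp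
      have h1 := Real.log_le_sub_one_of_pos hx
      rw [Real.log_div (ne_of_gt (hMpos ω)) (ne_of_gt hp)] at h1
      calc Ps 0 ω * (Real.log (M ω) - Real.log (Ps 0 ω))
          ≤ Ps 0 ω * (M ω / Ps 0 ω - 1) := by
            exact mul_le_mul_of_nonneg_left h1 (le_of_lt hp)
        _ = M ω - Ps 0 ω := by field_simp
    have hsumle : ∑ ω, Ps 0 ω * (Real.log (M ω) - Real.log (Ps 0 ω)) ≤ ∑ ω, (M ω - Ps 0 ω) :=
      Finset.sum_le_sum (fun ω _ => key ω)
    have : ∑ ω, (M ω - Ps 0 ω) = 0 := by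
      rw [Finset.sum_sub_distrib, hMsum, hPsum 0 h0T, sub_self]
    have hneg : ∑ ω, Ps 0 ω * (Real.log (M ω) - Real.log (Ps 0 ω)) = -v := by
      rw [hvdef, ← Finset.sum_neg_distrib]
      refine Finset.sum_congr rfl (fun ω _ => ?_)
      ring
    linarith [hsumle, hneg ▸ hsumle]
  -- v ≤ ∫ g · lam
  have hglamint : IntervalIntegrable (fun s => g s * lam s) volume 0 T := by
    refine hlamint.continuousOn_mul ?_
    rw [huIcc]; exact hgcont
  have hvle : v ≤ ∫ s in (0:ℝ)..T, g s * lam s := by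
    have hrepr : (fun s => g s * lam s)
        = fun s => ∑ ω, (Ps 0 ω * Real.log (Ps 0 ω) * lam s
            - Ps 0 ω * (Real.log (Ps s ω) * lam s)) := by
      funext s
      rw [hgdef, Finset.sum_mul]
      refine Finset.sum_congr rfl (fun ω _ => ?_)
      ring
    have hintterm : ∀ ω : Ω, IntervalIntegrable
        (fun s => Ps 0 ω * Real.log (Ps 0 ω) * lam s
            - Ps 0 ω * (Real.log (Ps s ω) * lam s)) volume 0 T :=
      fun ω => (hlamint.const_mul _).sub ((hlogint ω).const_mul _)
    have hcalc : (∫ s in (0:ℝ)..T, g s * lam s)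
        = ∑ ω, (Ps 0 ω * Real.log (Ps 0 ω)
            - Ps 0 ω * ∫ s in (0:ℝ)..T, Real.log (Ps s ω) * lam s) := by
      rw [hrepr, intervalIntegral.integral_finset_sum (fun ω _ => hintterm ω)]
      refine Finset.sum_congr rfl (fun ω _ => ?_)
      rw [intervalIntegral.integral_sub (hlamint.const_mul _) ((hlogint ω).const_mul _),
        intervalIntegral.integral_const_mul, intervalIntegral.integral_const_mul,
        hlamsum, mul_one]
    rw [hcalc, hvdef]
    refine Finset.sum_le_sum (fun ω _ => ?_)
    have := hJensen ω
    have hp := le_of_lt (hP0pos ω)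
    nlinarith [mul_le_mul_of_nonneg_left (hJensen ω) hp]
  -- maximum of g on [0,T]
  obtain ⟨t₀, ht₀, hmax⟩ := isCompact_Icc.exists_isMaxOn (Set.nonempty_Icc.mpr hT) hgcont
  have hgT : (∫ s in (0:ℝ)..T, g s * lam s) ≤ g t₀ := by
    have hle : (∫ s in (0:ℝ)..T, g s * lam s) ≤ ∫ s in (0:ℝ)..T, g t₀ * lam s := by
      refine intervalIntegral.integral_mono_on hT hglamint (hlamint.const_mul _) ?_
      intro s hs
      exact mul_le_mul_of_nonneg_right (hmax hs) (hlamnn s hs)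
    rwa [intervalIntegral.integral_const_mul, hlamsum, mul_one] at hle
  have hvle' : v ≤ g t₀ := le_trans hvle hgT
  -- intermediate value theorem on [0, t₀]
  have hsubset : Set.Icc (0:ℝ) t₀ ⊆ Set.Icc 0 T := Set.Icc_subset_Icc le_rfl ht₀.2
  have hIVT : v ∈ g '' Set.Icc (0:ℝ) t₀ := by
    refine intermediate_value_Icc ht₀.1 (hgcont.mono hsubset) ?_
    rw [hg0]
    exact ⟨hvnn, hvle'⟩
  obtain ⟨tstar, hts, hgts⟩ := hIVT
  refine ⟨tstar, hsubset hts, ?_, ?_⟩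
  · have hts' : tstar ∈ Set.Icc (0:ℝ) T := hsubset hts
    have hl : ∑ ω, Ps 0 ω * Real.log (Ps 0 ω / M ω) = v := by
      rw [hvdef]
      refine Finset.sum_congr rfl (fun ω _ => ?_)
      rw [Real.log_div (ne_of_gt (hP0pos ω)) (ne_of_gt (hMpos ω))]
    have hr : ∑ ω, Ps 0 ω * Real.log (Ps 0 ω / Ps tstar ω) = g tstar := by
      rw [hgdef]
      refine Finset.sum_congr rfl (fun ω _ => ?_)
      rw [Real.log_div (ne_of_gt (hP0pos ω)) (ne_of_gt (hPpos tstar hts' ω))]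
    rw [hl, hr, hgts]
  · have hts' : tstar ∈ Set.Icc (0:ℝ) T := hsubset hts
    have hl : ∑ ω, Ps 0 ω * Real.log (Ps 0 ω / M ω) = v := by
      rw [hvdef]
      refine Finset.sum_congr rfl (fun ω _ => ?_)
      rw [Real.log_div (ne_of_gt (hP0pos ω)) (ne_of_gt (hMpos ω))]
    have hr : ∑ ω, Ps 0 ω * Real.log (Ps 0 ω / Ps tstar ω) = g tstar := by
      rw [hgdef]
      refine Finset.sum_congr rfl (fun ω _ => ?_)
      rw [Real.log_div (ne_of_gt (hP0pos ω)) (ne_of_gt (hPpos tstar hts' ω))]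
    rw [hl, hr, hgts]
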